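/- Existence of classical splits: Given a probability distribution P_A on a finite totally ordered set 𝒜, there exist families of distributions P_U^θ and P_V^θ on 𝒜 parameterized by θ ∈ [0,1] and a function f : 𝒜 × 𝒜 → 𝒜 such that: (1) if U ~ P_U^θ and V ~ P_V^θ are independent then f(U,V) ~ P_A; (2) for each fixed a and u, the conditional probability P^θ_{f(U,V)|U}(a|u) is a continuous function of θ; (3) at θ = 0, P^θ_{f(U,V)|U}(a|u) = P_A(a); (4) at θ = 1, for every u ∈ 𝒜 the conditional distribution P^θ_{f(U,V)|U}(·|u) puts all its mass on one element. In particular the explicit choice F_U^θ(i) := θ F_A(i) + 1 − θ, F_V^θ(i) := F_A(i)/F_U^θ(i), f(u,v) := max{u,v} has these properties. -/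

import Mathlib

noncomputable section
open scoped BigOperators
open MeasureTheory Kronecker Matrix
open scoped ComplexOrder
attribute [local instance] Classical.propDecidable

namespace QIT

variable {ι κ : Type*}

/-- A measurable-space structure on matrices, coming from the product σ-algebra. -/
instance matMeasurableSpace (m n : Type*) : MeasurableSpace (Matrix m n ℂ) :=
  (inferInstance : MeasurableSpace (m → n → ℂ))

/-- Unit vector predicate. -/
def UnitVec {ι : Type*} [Fintype ι] (v : ι → ℂ) : Prop :=
  ∑ i, Complex.normSq (v i) = 1

/-- The pure state (rank-one projector) associated to a vector. -/
def pureState {ι : Type*} (v : ι → ℂ) : Matrix ι ι ℂ :=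
  Matrix.vecMulVec v (star v)

/-- Schatten 1-norm (trace norm) of a complex square matrix, via singular values. -/
def traceNorm [Fintype ι] [DecidableEq ι] (M : Matrix ι ι ℂ) : ℝ :=
  ∑ i, Real.sqrt ((Matrix.isHermitian_conjTranspose_mul_self M).eigenvalues i)

/-- Square root of a positive semidefinite matrix (junk value `0` otherwise). -/
def psqrt [Fintype ι] [DecidableEq ι] (M : Matrix ι ι ℂ) : Matrix ι ι ℂ :=
  if h : M.PosSemidef then
    h.1.eigenvectorUnitary.1 * Matrix.diagonal ((↑) ∘ (Real.sqrt ∘ h.1.eigenvalues)) *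
      (star h.1.eigenvectorUnitary : Matrix ι ι ℂ) else 0

/-- Generalised fidelity of two (sub)normalised states. -/
def gFid [Fintype ι] [DecidableEq ι] (ρ σ : Matrix ι ι ℂ) : ℝ :=
  traceNorm (psqrt ρ * psqrt σ) +
    Real.sqrt ((1 - ρ.trace.re) * (1 - σ.trace.re))

/-- Purified distance. -/
def pDist [Fintype ι] [DecidableEq ι] (ρ σ : Matrix ι ι ℂ) : ℝ :=
  Real.sqrt (1 - gFid ρ σ ^ 2)

/-- Purified distance between two pure states given by vectors. -/
def pureDist {ι : Type*} [Fintype ι] (v w : ι → ℂ) : ℝ :=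
  Real.sqrt (1 - ‖∑ i, (starRingEnd ℂ) (v i) * w i‖ ^ 2)

/-- Subnormalised density operator. -/
def IsSubState [Fintype ι] (ρ : Matrix ι ι ℂ) : Prop :=
  ρ.PosSemidef ∧ ρ.trace.re ≤ 1

/-- Normalised density operator. -/
def IsState [Fintype ι] (ρ : Matrix ι ι ℂ) : Prop :=
  ρ.PosSemidef ∧ ρ.trace = 1

/-- ε-smooth conditional min-entropy `H_min^ε(A|B)_ρ` of a bipartite (sub)state,
conditioning on the second tensor factor.  Logarithms are base 2. -/
def Hmin {α β : Type*} [Fintype α] [DecidableEq α] [Fintype β] [DecidableEq β]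
    (ε : ℝ) (ρ : Matrix (α × β) (α × β) ℂ) : ℝ :=
  - Real.logb 2 (sInf {t : ℝ | ∃ ρ' : Matrix (α × β) (α × β) ℂ, ∃ σ : Matrix β β ℂ,
      IsSubState ρ' ∧ pDist ρ' ρ ≤ ε ∧ σ.PosSemidef ∧
      ((1 : Matrix α α ℂ) ⊗ₖ σ - ρ').PosSemidef ∧ t = σ.trace.re})

/-- Unconditional smooth min-entropy (one-dimensional conditioning system). -/
def Hmin0 {α : Type*} [Fintype α] [DecidableEq α] (ε : ℝ) (ρ : Matrix α α ℂ) : ℝ :=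
  Hmin ε (ρ.submatrix (fun p : α × Unit => p.1) (fun p : α × Unit => p.1))

/-- Canonical purification vector of a matrix (meaningful for PSD matrices). -/
def purifyVec [Fintype ι] [DecidableEq ι] (ρ : Matrix ι ι ℂ) : ι × ι → ℂ :=
  fun p => psqrt ρ p.1 p.2

/-- Reduced density matrix of a pure state `v` on a system relabelled by `f : kept × traced → full`. -/
def marg {F K T : Type*} [Fintype T] (f : K × T → F) (v : F → ℂ) : Matrix K K ℂ :=
  Matrix.of fun k k' => ∑ t, v (f (k, t)) * (starRingEnd ℂ) (v (f (k', t)))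

/-- Reduced density matrix of a mixed state `M` under the relabelling `f : kept × traced → full`. -/
def margM {F K T : Type*} [Fintype T] (f : K × T → F) (M : Matrix F F ℂ) : Matrix K K ℂ :=
  Matrix.of fun k k' => ∑ t, M (f (k, t)) (f (k', t))

/-- Partial trace over the first tensor factor. -/
def ptraceFst {T K : Type*} [Fintype T] (M : Matrix (T × K) (T × K) ℂ) : Matrix K K ℂ :=
  Matrix.of fun k k' => ∑ t, M (t, k) (t, k')

/-- Partial trace over the second tensor factor. -/
def ptraceSnd {K T : Type*} [Fintype T] (M : Matrix (K × T) (K × T) ℂ) : Matrix K K ℂ :=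
  Matrix.of fun k k' => ∑ t, M (k, t) (k', t)

/-- ε-smooth max-entropy `H_max^ε(A)_ρ := −H_min^ε(A|E)` of (a purification of) `ρ`. -/
def Hmax {α : Type*} [Fintype α] [DecidableEq α] (ε : ℝ) (ρ : Matrix α α ℂ) : ℝ :=
  - Hmin ε (pureState (purifyVec ρ))

/-- ε-smooth coherent min-information `I_min^ε(A>B)_ρ := H_min^ε(A|E)` evaluated on
(the A,E marginal of) a purification of `ρ^{AB}`. -/
def Imin {α β : Type*} [Fintype α] [DecidableEq α] [Fintype β] [DecidableEq β]
    (ε : ℝ) (ρ : Matrix (α × β) (α × β) ℂ) : ℝ :=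
  Hmin ε (marg (fun q : (α × (α × β)) × β => ((q.1.1, q.2), q.1.2)) (purifyVec ρ))

/-- Frobenius (Schatten 2-) norm. -/
def frobNorm {ι : Type*} [Fintype ι] (M : Matrix ι ι ℂ) : ℝ :=
  Real.sqrt (∑ i, ∑ j, ‖M i j‖ ^ 2)

/-- Real power of a Hermitian matrix through its spectral decomposition
(junk value `0` for non-Hermitian input). -/
def rpowMat [Fintype ι] [DecidableEq ι] (σ : Matrix ι ι ℂ) (r : ℝ) : Matrix ι ι ℂ :=
  if h : σ.IsHermitian then
    (h.eigenvectorUnitary : Matrix ι ι ℂ) *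
      Matrix.diagonal (fun i => ((h.eigenvalues i ^ r : ℝ) : ℂ)) *
      (h.eigenvectorUnitary : Matrix ι ι ℂ)ᴴ
  else 0

/-- ε-smooth sandwiched Rényi-2 conditional entropy `H₂^ε(A|B)_ρ`, conditioning on the
second factor. -/
def H2 {α β : Type*} [Fintype α] [DecidableEq α] [Fintype β] [DecidableEq β]
    (ε : ℝ) (ρ : Matrix (α × β) (α × β) ℂ) : ℝ :=
  -2 * Real.logb 2 (sInf {t : ℝ | ∃ ρ' : Matrix (α × β) (α × β) ℂ, ∃ σ : Matrix β β ℂ,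
      IsSubState ρ' ∧ pDist ρ' ρ ≤ ε ∧ σ.PosDef ∧ σ.trace = 1 ∧
      t = frobNorm (((1 : Matrix α α ℂ) ⊗ₖ rpowMat σ (-(1/4 : ℝ))) * ρ' *
        ((1 : Matrix α α ℂ) ⊗ₖ rpowMat σ (-(1/4 : ℝ))))})

/-- Unconditional smooth sandwiched Rényi-2 entropy. -/
def H20 {α : Type*} [Fintype α] [DecidableEq α] (ε : ℝ) (ρ : Matrix α α ℂ) : ℝ :=
  H2 ε (ρ.submatrix (fun p : α × Unit => p.1) (fun p : α × Unit => p.1))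

/-- `op^{X→Y}` : reinterpret a vector on `X ⊗ Y` as an operator from `X` to `Y`. -/
def opMat {X Y : Type*} (v : X × Y → ℂ) : Matrix Y X ℂ :=
  Matrix.of fun y x => v (x, y)

/-- Apply an operator on the first tensor factor of a vector. -/
def applyLeft {X Y R : Type*} [Fintype X] (M : Matrix Y X ℂ) (w : X × R → ℂ) : Y × R → ℂ :=
  fun p => ∑ x, M p.1 x * w (x, p.2)

/-- Linearity of a superoperator. -/
def IsLin (Φ : Matrix ι ι ℂ → Matrix κ κ ℂ) : Prop :=
  ∀ (c : ℂ) (M N : Matrix ι ι ℂ), Φ (c • M + N) = c • Φ M + Φ N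

/-- Tensor extension `Φ ⊗ id_R` of a superoperator, acting on the first factor. -/
def extAncilla (Φ : Matrix ι ι ℂ → Matrix κ κ ℂ) {R : Type*}
    (M : Matrix (ι × R) (ι × R) ℂ) : Matrix (κ × R) (κ × R) ℂ :=
  Matrix.of fun x y => Φ (Matrix.of fun a b => M (a, x.2) (b, y.2)) x.1 y.1

/-- Complete positivity. -/
def IsCP [Fintype ι] [Fintype κ] (Φ : Matrix ι ι ℂ → Matrix κ κ ℂ) : Prop :=
  ∀ (R : Type) [Fintype R], ∀ M : Matrix (ι × R) (ι × R) ℂ,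
    M.PosSemidef → (extAncilla Φ M).PosSemidef

/-- Trace preservation. -/
def IsTP [Fintype ι] [Fintype κ] (Φ : Matrix ι ι ℂ → Matrix κ κ ℂ) : Prop :=
  ∀ M : Matrix ι ι ℂ, (Φ M).trace = M.trace

/-- Quantum channel: linear, completely positive, trace preserving. -/
def IsCPTP [Fintype ι] [Fintype κ] (Φ : Matrix ι ι ℂ → Matrix κ κ ℂ) : Prop :=
  IsLin Φ ∧ IsCP Φ ∧ IsTP Φ

/-- `V` is a Stinespring dilation (with environment `E`) of the superoperator `Φ`. -/
def IsStinespring {E : Type*} [Fintype ι] [DecidableEq ι] [Fintype κ] [Fintype E]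
    (Φ : Matrix ι ι ℂ → Matrix κ κ ℂ) (V : Matrix (κ × E) ι ℂ) : Prop :=
  Vᴴ * V = 1 ∧ ∀ M : Matrix ι ι ℂ, Φ M = ptraceSnd (V * M * Vᴴ)

/-- von Neumann entropy (base 2). -/
def vN [Fintype ι] [DecidableEq ι] (ρ : Matrix ι ι ℂ) : ℝ :=
  if h : ρ.IsHermitian then -∑ i, (h.eigenvalues i) * Real.logb 2 (h.eigenvalues i) else 0

/-- Coherent information `I(A>B)_ρ = H(B) − H(AB)` of a bipartite state. -/
def cohInfo {α β : Type*} [Fintype α] [DecidableEq α] [Fintype β] [DecidableEq β]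
    (ρ : Matrix (α × β) (α × β) ℂ) : ℝ :=
  vN (ptraceFst ρ) - vN ρ

/-- (Left- and right-) invariant probability measure on the unitary group, i.e.,
the Haar probability measure. -/
def IsHaarLike {ι : Type*} [Fintype ι] [DecidableEq ι]
    (μ : Measure ↥(Matrix.unitaryGroup ι ℂ)) : Prop :=
  (∀ V : ↥(Matrix.unitaryGroup ι ℂ), Measure.map (fun U => V * U) μ = μ) ∧
  (∀ V : ↥(Matrix.unitaryGroup ι ℂ), Measure.map (fun U => U * V) μ = μ)

/-- Maximally entangled (EPR) vector of rank `m`. -/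
def mevec (m : ℕ) : Fin m × Fin m → ℂ :=
  fun p => if p.1 = p.2 then ((1 / Real.sqrt m : ℝ) : ℂ) else 0

/-- Maximally mixed state. -/
def mms (ι : Type*) [Fintype ι] [DecidableEq ι] : Matrix ι ι ℂ :=
  ((Fintype.card ι : ℂ)⁻¹) • (1 : Matrix ι ι ℂ)

end QIT

namespace QIT

/-- Cumulative distribution function `F_P(i) = Σ_{j ≤ i} P(j)` on a finite ordered set. -/
def cdf {α : Type*} [Fintype α] [LinearOrder α] (P : α → ℝ) (i : α) : ℝ :=
  ∑ j ∈ Finset.univ.filter (fun j => j ≤ i), P j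

/-- Strict cumulative distribution function `F_P(i−1) = Σ_{j < i} P(j)`. -/
def cdfLt {α : Type*} [Fintype α] [LinearOrder α] (P : α → ℝ) (i : α) : ℝ :=
  ∑ j ∈ Finset.univ.filter (fun j => j < i), P j

/-- A probability mass function on a finite set. -/
def IsPMF {α : Type*} [Fintype α] (P : α → ℝ) : Prop :=
  (∀ i, 0 ≤ P i) ∧ ∑ i, P i = 1

/-- The first split distribution `P_U^θ`, the pmf with cdf `F_U^θ(i) = θ F_A(i) + 1 − θ`. -/
def splitU {α : Type*} [Fintype α] [LinearOrder α] [OrderBot α]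
    (P : α → ℝ) (θ : ℝ) (i : α) : ℝ :=
  θ * P i + (if i = ⊥ then 1 - θ else 0)

/-- The second split distribution `P_V^θ`, the pmf with cdf `F_V^θ(i) = F_A(i)/F_U^θ(i)`. -/
def splitV {α : Type*} [Fintype α] [LinearOrder α] (P : α → ℝ) (θ : ℝ) (i : α) : ℝ :=
  cdf P i / (θ * cdf P i + 1 - θ) - cdfLt P i / (θ * cdfLt P i + 1 - θ)

end QIT

namespace QIT
set_option linter.unusedSectionVars false

variable {α : Type*} [Fintype α] [LinearOrder α]

private lemma cdfLt_nonneg' (P : α → ℝ) (hP : ∀ i, 0 ≤ P i) (a : α) : 0 ≤ cdfLt P a :=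
  Finset.sum_nonneg fun j _ => hP j

private lemma cdf_nonneg' (P : α → ℝ) (hP : ∀ i, 0 ≤ P i) (a : α) : 0 ≤ cdf P a :=
  Finset.sum_nonneg fun j _ => hP j

private lemma filter_le_eq_insert' (a : α) :
    Finset.univ.filter (fun j => j ≤ a) = insert a (Finset.univ.filter (fun j => j < a)) := by
  ext j; simp [le_iff_lt_or_eq, or_comm]

private lemma cdf_eq_cdfLt_add' (P : α → ℝ) (a : α) : cdf P a = cdfLt P a + P a := by
  unfold cdf cdfLt
  rw [filter_le_eq_insert', Finset.sum_insert (by simp)]; ring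

private lemma cdfLt_le_cdf' (P : α → ℝ) (hP : ∀ i, 0 ≤ P i) (a : α) : cdfLt P a ≤ cdf P a := by
  rw [cdf_eq_cdfLt_add']; linarith [hP a]

private lemma den_pos' {θ c : ℝ} (hθ0 : 0 ≤ θ) (hθ1 : θ ≤ 1) (hc : 0 < c) :
    0 < θ * c + 1 - θ := by
  rcases eq_or_lt_of_le hθ0 with h | h
  · simp [← h]
  · nlinarith

private lemma key_mul' {θ c : ℝ} (hθ0 : 0 ≤ θ) (hθ1 : θ ≤ 1) (hc : 0 ≤ c) :
    (θ * c + 1 - θ) * (c / (θ * c + 1 - θ)) = c := by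
  rcases eq_or_lt_of_le hc with h | h
  · simp [← h]
  · rw [mul_comm, div_mul_cancel₀ _ (den_pos' hθ0 hθ1 h).ne']

private lemma sum_splitU_le' [OrderBot α] (P : α → ℝ) (θ : ℝ) (a : α) :
    ∑ u ∈ Finset.univ.filter (fun j => j ≤ a), splitU P θ u = θ * cdf P a + (1 - θ) := by
  unfold splitU cdf
  rw [Finset.sum_add_distrib, ← Finset.mul_sum, Finset.sum_ite_eq' _ (⊥ : α)]
  simp

private lemma sum_splitU_lt' [OrderBot α] (P : α → ℝ) (θ : ℝ) (a : α) :
    ∑ u ∈ Finset.univ.filter (fun j => j < a), splitU P θ u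
      = θ * cdfLt P a + (if ⊥ < a then 1 - θ else 0) := by
  unfold splitU cdfLt
  rw [Finset.sum_add_distrib, ← Finset.mul_sum, Finset.sum_ite_eq' _ (⊥ : α)]
  simp

private lemma sum_splitV_lt' (P : α → ℝ) (θ : ℝ) (a : α) :
    ∑ v ∈ Finset.univ.filter (fun j => j < a), splitV P θ v
      = cdfLt P a / (θ * cdfLt P a + 1 - θ) := by
  induction a using WellFoundedLT.induction with
  | _ a ih =>
    rcases (Finset.univ.filter (fun j => j < a)).eq_empty_or_nonempty with h | h
    · have h0 : cdfLt P a = 0 := by unfold cdfLt; rw [h, Finset.sum_empty]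
      rw [h, h0, Finset.sum_empty, zero_div]
    · set m := (Finset.univ.filter (fun j => j < a)).max' h with hm
      have hma : m < a := (Finset.mem_filter.mp ((Finset.univ.filter (fun j => j < a)).max'_mem h)).2
      have hset : Finset.univ.filter (fun j => j < a) = Finset.univ.filter (fun j => j ≤ m) := by
        ext j
        simp only [Finset.mem_filter, Finset.mem_univ, true_and]
        constructor
        · intro hj; exact Finset.le_max' _ j (by simp [hj])
        · intro hj; exact lt_of_le_of_lt hj hma
      have hcdf : cdfLt P a = cdf P m := by unfold cdfLt cdf; rw [hset]
      rw [hset, hcdf, filter_le_eq_insert', Finset.sum_insert (by simp), ih m hma]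
      unfold splitV cdf cdfLt
      ring

private lemma sum_splitV_le' (P : α → ℝ) (θ : ℝ) (a : α) :
    ∑ v ∈ Finset.univ.filter (fun j => j ≤ a), splitV P θ v
      = cdf P a / (θ * cdf P a + 1 - θ) := by
  rw [filter_le_eq_insert', Finset.sum_insert (by simp), sum_splitV_lt']
  unfold splitV
  ring

private lemma G_mono' {θ c d : ℝ} (hθ0 : 0 ≤ θ) (hθ1 : θ ≤ 1) (hd : 0 ≤ d) (hdc : d ≤ c) :
    d / (θ * d + 1 - θ) ≤ c / (θ * c + 1 - θ) := by
  by_cases hθ : θ = 1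
  · subst hθ
    simp only [one_mul, add_sub_cancel_right]
    rcases eq_or_lt_of_le hd with h | h
    · rw [← h, zero_div]
      exact div_nonneg (le_trans hd hdc) (le_trans hd hdc)
    · rw [div_self h.ne', div_self (lt_of_lt_of_le h hdc).ne']
  · have hθ1' : θ < 1 := lt_of_le_of_ne hθ1 hθ
    have hdp : 0 < θ * d + 1 - θ := by nlinarith
    have hcp : 0 < θ * c + 1 - θ := by nlinarith
    rw [div_le_div_iff₀ hdp hcp]
    nlinarith

private lemma splitV_nonneg' (P : α → ℝ) (hP : ∀ i, 0 ≤ P i) {θ : ℝ} (hθ0 : 0 ≤ θ)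
    (hθ1 : θ ≤ 1) (i : α) : 0 ≤ splitV P θ i := by
  have := G_mono' hθ0 hθ1 (cdfLt_nonneg' P hP i) (cdfLt_le_cdf' P hP i)
  unfold splitV; linarith

private lemma continuousOn_splitV' (P : α → ℝ) (hP : ∀ i, 0 ≤ P i) (v : α) :
    ContinuousOn (fun θ => splitV P θ v) (Set.Icc (0:ℝ) 1) := by
  by_cases hc : cdf P v = 0
  · have hd : cdfLt P v = 0 :=
      le_antisymm (hc ▸ cdfLt_le_cdf' P hP v) (cdfLt_nonneg' P hP v)
    simp only [splitV, hc, hd, zero_div, sub_zero]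
    exact continuousOn_const
  · have hcpos : 0 < cdf P v := lt_of_le_of_ne (cdf_nonneg' P hP v) (Ne.symm hc)
    apply ContinuousOn.sub
    · exact ContinuousOn.div continuousOn_const (by fun_prop)
        fun θ hθ => (den_pos' hθ.1 hθ.2 hcpos).ne'
    · by_cases hd : cdfLt P v = 0
      · simp only [hd, zero_div]; exact continuousOn_const
      · have hdpos : 0 < cdfLt P v := lt_of_le_of_ne (cdfLt_nonneg' P hP v) (Ne.symm hd)
        exact ContinuousOn.div continuousOn_const (by fun_prop)
          fun θ hθ => (den_pos' hθ.1 hθ.2 hdpos).ne'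

private lemma ite_max_eq' (u v a : α) (x y : ℝ) :
    (if max u v = a then x * y else 0)
      = (if u ≤ a then x else 0) * (if v ≤ a then y else 0)
        - (if u < a then x else 0) * (if v < a then y else 0) := by
  by_cases hu : u ≤ a
  · by_cases hv : v ≤ a
    · by_cases huv : u < a ∧ v < a
      · have hlt : max u v < a := max_lt huv.1 huv.2
        rw [if_neg hlt.ne, if_pos hu, if_pos hv, if_pos huv.1, if_pos huv.2]; ring
      · have hmax : max u v = a := by
          rcases not_and_or.mp huv with h | h
          · have he : u = a := le_antisymm hu (not_lt.mp h)
            exact le_antisymm (max_le hu hv) (he ▸ le_max_left u v)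
          · have he : v = a := le_antisymm hv (not_lt.mp h)
            exact le_antisymm (max_le hu hv) (he ▸ le_max_right u v)
        rw [if_pos hmax, if_pos hu, if_pos hv]
        rcases not_and_or.mp huv with h | h
        · rw [if_neg h]; ring
        · rw [if_neg h]; ring
    · have h1 : ¬ max u v = a := by
        intro h; exact hv (h ▸ le_max_right u v)
      rw [if_neg h1, if_neg hv, if_neg (fun h : v < a => hv (le_of_lt h))]; ring
  · have h1 : ¬ max u v = a := by
      intro h; exact hu (h ▸ le_max_left u v)
    rw [if_neg h1, if_neg hu, if_neg (fun h : u < a => hu (le_of_lt h))]; ring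

private lemma pair_sum' (f g : α → ℝ) (a : α) :
    (∑ p : α × α, if max p.1 p.2 = a then f p.1 * g p.2 else 0)
      = (∑ u ∈ Finset.univ.filter (fun j => j ≤ a), f u)
          * (∑ v ∈ Finset.univ.filter (fun j => j ≤ a), g v)
        - (∑ u ∈ Finset.univ.filter (fun j => j < a), f u)
          * (∑ v ∈ Finset.univ.filter (fun j => j < a), g v) := by
  rw [Finset.sum_filter, Finset.sum_filter, Finset.sum_filter, Finset.sum_filter,
    Finset.sum_mul_sum, Finset.sum_mul_sum, ← Finset.sum_sub_distrib,
    Fintype.sum_prod_type]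
  refine Finset.sum_congr rfl fun u _ => ?_
  rw [← Finset.sum_sub_distrib]
  exact Finset.sum_congr rfl fun v _ => ite_max_eq' u v a (f u) (g v)

end QIT

open QIT in
/-- Existence of classical splits: a family `(P_U^θ, P_V^θ, f)` such that
(1) `f(U,V) ∼ P_A` for independent `U ∼ P_U^θ`, `V ∼ P_V^θ`; (2) the conditional probability
`P^θ_{f(U,V)|U}(a|u)` is continuous in `θ`; (3) at `θ = 0` it equals `P_A(a)` (for `u` in the
support of `P_U^0`); (4) at `θ = 1` it is a point mass for every `u`.  In particular, the
explicit choice `F_U^θ = θF_A + 1 − θ`, `F_V^θ = F_A/F_U^θ`, `f = max` works. -/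
theorem exists_classical_split
    {α : Type*} [Fintype α] [LinearOrder α] [OrderBot α]
    (P : α → ℝ) (hP : IsPMF P) :
    ∃ (PU PV : ℝ → α → ℝ) (f : α → α → α),
      (∀ θ ∈ Set.Icc (0:ℝ) 1, IsPMF (PU θ) ∧ IsPMF (PV θ)) ∧
      -- (1) f(U,V) ∼ P_A
      (∀ θ ∈ Set.Icc (0:ℝ) 1, ∀ a : α,
        (∑ p : α × α, if f p.1 p.2 = a then PU θ p.1 * PV θ p.2 else 0) = P a) ∧
      -- (2) continuity of the conditional probability in θ
      (∀ (a u : α),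
        ContinuousOn (fun θ => ∑ v, if f u v = a then PV θ v else 0) (Set.Icc (0:ℝ) 1)) ∧
      -- (3) at θ = 0 the conditional distribution is P_A
      (∀ (a u : α), 0 < PU 0 u →
        (∑ v, if f u v = a then PV 0 v else 0) = P a) ∧
      -- (4) at θ = 1 the conditional distribution is a point mass
      (∀ u : α, ∃ a : α, (∑ v, if f u v = a then PV 1 v else 0) = 1) ∧
      -- the explicit construction realises all of the above
      PU = splitU P ∧ PV = splitV P ∧ f = (fun u v => max u v) := by
  obtain ⟨hP0, hP1⟩ := hP
  refine ⟨splitU P, splitV P, fun u v => max u v, ?_, ?_, ?_, ?_, ?_, rfl, rfl, rfl⟩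
  · -- pmf's
    intro θ hθ
    obtain ⟨hθ0, hθ1⟩ := hθ
    constructor
    · constructor
      · intro i
        unfold splitU
        have h1 : 0 ≤ θ * P i := mul_nonneg hθ0 (hP0 i)
        have h2 : (0:ℝ) ≤ if i = ⊥ then 1 - θ else 0 := by
          split <;> linarith
        linarith
      · have h : ∑ i, splitU P θ i = θ * 1 + (1 - θ) := by
          unfold splitU
          rw [Finset.sum_add_distrib, ← Finset.mul_sum, hP1, Finset.sum_ite_eq' _ (⊥ : α)]
          simp
        rw [h]; ring
    · constructor
      · exact fun i => splitV_nonneg' P hP0 hθ0 hθ1 i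
      · have hne : (Finset.univ : Finset α).Nonempty := ⟨⊥, Finset.mem_univ ⊥⟩
        set t := (Finset.univ : Finset α).max' hne with ht
        have huniv : Finset.univ.filter (fun j : α => j ≤ t) = Finset.univ := by
          ext j
          simp only [Finset.mem_filter, Finset.mem_univ, true_and, iff_true]
          exact Finset.le_max' _ j (Finset.mem_univ j)
        have h1 : cdf P t = 1 := by unfold cdf; rw [huniv, hP1]
        have e : θ * (1:ℝ) + 1 - θ = 1 := by ring
        calc ∑ i, splitV P θ i
            = ∑ v ∈ Finset.univ.filter (fun j : α => j ≤ t), splitV P θ v := by rw [huniv]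
          _ = cdf P t / (θ * cdf P t + 1 - θ) := sum_splitV_le' P θ t
          _ = 1 := by rw [h1, e, div_one]
  · -- (1)
    intro θ hθ a
    obtain ⟨hθ0, hθ1⟩ := hθ
    have := pair_sum' (splitU P θ) (splitV P θ) a
    simp only [] at this ⊢
    rw [this, sum_splitU_le', sum_splitV_le', sum_splitU_lt', sum_splitV_lt']
    have e1 : θ * cdf P a + (1 - θ) = θ * cdf P a + 1 - θ := by ring
    rw [e1, key_mul' hθ0 hθ1 (cdf_nonneg' P hP0 a)]
    by_cases ha : (⊥:α) < a
    · rw [if_pos ha]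
      have e2 : θ * cdfLt P a + (1 - θ) = θ * cdfLt P a + 1 - θ := by ring
      rw [e2, key_mul' hθ0 hθ1 (cdfLt_nonneg' P hP0 a)]
      have := cdf_eq_cdfLt_add' P a
      linarith
    · have ha' : a = ⊥ := le_bot_iff.mp (not_lt.mp ha)
      have h0 : cdfLt P a = 0 := by
        subst ha'
        unfold cdfLt
        rw [Finset.filter_false_of_mem (fun j _ => not_lt_bot), Finset.sum_empty]
      rw [if_neg ha, h0]
      have := cdf_eq_cdfLt_add' P a
      rw [h0] at this
      simp [this]
  · -- (2)
    intro a u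
    apply continuousOn_finset_sum
    intro v _
    by_cases h : max u v = a
    · simp only [if_pos h]
      exact continuousOn_splitV' P hP0 v
    · simp only [if_neg h]
      exact continuousOn_const
  · -- (3)
    intro a u hu
    have hub : u = ⊥ := by
      by_contra h
      simp [splitU, h] at hu
    subst hub
    have hmax : ∀ v : α, max (⊥:α) v = v := fun v => max_eq_right bot_le
    simp only [hmax]
    rw [Finset.sum_ite_eq' Finset.univ a]
    simp only [Finset.mem_univ, if_true]
    have := cdf_eq_cdfLt_add' P a
    simp [splitV]
    linarith
  · -- (4)
    intro u
    have hsupp : (Finset.univ.filter (fun j => P j ≠ 0)).Nonempty := by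
      by_contra h
      rw [Finset.not_nonempty_iff_eq_empty, Finset.filter_eq_empty_iff] at h
      have hz : ∑ i, P i = 0 :=
        Finset.sum_eq_zero fun i hi => not_not.mp (h hi)
      rw [hP1] at hz
      norm_num at hz
    set a0 := (Finset.univ.filter (fun j => P j ≠ 0)).min' hsupp with ha0
    have hPa0 : 0 < P a0 := by
      have := (Finset.mem_filter.mp ((Finset.univ.filter (fun j => P j ≠ 0)).min'_mem hsupp)).2
      exact lt_of_le_of_ne (hP0 a0) (Ne.symm this)
    by_cases hu : cdf P u = 0
    · refine ⟨a0, ?_⟩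
      have hua : u < a0 := by
        by_contra h
        push_neg at h
        have hle : P a0 ≤ cdf P u := by
          apply Finset.single_le_sum (fun j _ => hP0 j)
          simp [h]
        linarith
      have hcond : ∀ v : α, (max u v = a0) ↔ (v = a0) := by
        intro v
        constructor
        · intro h
          rcases max_choice u v with hc | hc
          · rw [hc] at h; exact absurd h hua.ne
          · rw [← hc, h]
        · intro h; subst h; exact max_eq_right hua.le
      simp only [hcond]
      rw [Finset.sum_ite_eq' Finset.univ a0]
      simp only [Finset.mem_univ, if_true]
      have hlt0 : cdfLt P a0 = 0 := by
        apply Finset.sum_eq_zero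
        intro j hj
        have hj' : j < a0 := (Finset.mem_filter.mp hj).2
        by_contra hPj
        exact absurd (Finset.min'_le _ j (by simp [hPj])) (not_le.mpr hj')
      have hc0 : cdf P a0 = P a0 := by rw [cdf_eq_cdfLt_add' P a0, hlt0]; ring
      have e : (1:ℝ) * cdf P a0 + 1 - 1 = P a0 := by rw [hc0]; ring
      simp only [splitV, hlt0, e, zero_div]
      rw [hc0, div_self hPa0.ne']
      simp
    · refine ⟨u, ?_⟩
      have hcond : ∀ v : α, (max u v = u) ↔ (v ≤ u) := fun v => max_eq_left_iff
      simp only [hcond]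
      rw [← Finset.sum_filter, sum_splitV_le']
      have hcp : 0 < cdf P u := lt_of_le_of_ne (cdf_nonneg' P hP0 u) (Ne.symm hu)
      have e : (1:ℝ) * cdf P u + 1 - 1 = cdf P u := by ring
      rw [e, div_self hcp.ne']
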